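/- Let r ≥ 2 and let u, v be positive C¹ functions on an open set Ω ⊂ ℝ^N. Then pointwise one has (u^r − v^r)(|∇log u|^r − |∇log v|^r) − r v^r |∇log u|^{r−2}∇log u·(∇log v − ∇log u) − r u^r |∇log v|^{r−2}∇log v·(∇log u − ∇log v) ≥ (1/(2^{r−1}−1)) |u∇v − v∇u|^r (1/u^r + 1/v^r). -/

import Mathlib

open Real Filter

-- superadditivity of rpow
lemma rpow_superadd {x y p : ℝ} (hx : 0 ≤ x) (hy : 0 ≤ y) (hp : 1 ≤ p) :
    x ^ p + y ^ p ≤ (x + y) ^ p := by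
  have hp0 : 0 < p := lt_of_lt_of_le one_pos hp
  rcases eq_or_lt_of_le hx with rfl | hx'
  · simp [Real.zero_rpow hp0.ne']
  rcases eq_or_lt_of_le hy with rfl | hy'
  · simp [Real.zero_rpow hp0.ne']
  have hxy : 0 < x + y := by linarith
  have h1 : x ^ p ≤ x * (x + y) ^ (p - 1) := by
    calc x ^ p = x * x ^ (p - 1) := by
          rw [← Real.rpow_one_add' hx (by linarith)]; ring_nf
      _ ≤ x * (x + y) ^ (p - 1) :=
          mul_le_mul_of_nonneg_left
            (Real.rpow_le_rpow hx (by linarith) (by linarith)) hx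
  have h2 : y ^ p ≤ y * (x + y) ^ (p - 1) := by
    calc y ^ p = y * y ^ (p - 1) := by
          rw [← Real.rpow_one_add' hy (by linarith)]; ring_nf
      _ ≤ y * (x + y) ^ (p - 1) :=
          mul_le_mul_of_nonneg_left
            (Real.rpow_le_rpow hy (by linarith) (by linarith)) hy
  calc x ^ p + y ^ p ≤ (x + y) * (x + y) ^ (p - 1) := by linarith [h1, h2]
    _ = (x + y) ^ p := by
        rw [← Real.rpow_one_add' hxy.le (by linarith)]; ring_nf

-- tangent line inequality for t ↦ t^p on [0,∞)
lemma rpow_tangent {s t p : ℝ} (hs : 0 ≤ s) (ht : 0 ≤ t) (hp : 1 ≤ p) :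
    s ^ p + p * s ^ (p - 1) * (t - s) ≤ t ^ p := by
  have hp0 : 0 < p := lt_of_lt_of_le one_pos hp
  rcases eq_or_lt_of_le hs with rfl | hs'
  · rcases eq_or_lt_of_le hp with rfl | hp'
    · simp [Real.zero_rpow hp0.ne']
    · simp [Real.zero_rpow hp0.ne', Real.zero_rpow (by linarith : p - 1 ≠ 0)]
      positivity
  · have hz : -1 ≤ t / s - 1 := by
      have := div_nonneg ht hs'.le; linarith
    have hb := one_add_mul_self_le_rpow_one_add hz hp
    have key : (1 + (t / s - 1)) ^ p = t ^ p / s ^ p := by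
      rw [show 1 + (t / s - 1) = t / s by ring, Real.div_rpow ht hs'.le]
    rw [key] at hb
    have hsp : 0 < s ^ p := Real.rpow_pos_of_pos hs' p
    have hb' : (1 + p * (t / s - 1)) * s ^ p ≤ t ^ p := (le_div_iff₀ hsp).mp hb
    have hps : s ^ p = s * s ^ (p - 1) := by
      rw [show p = 1 + (p - 1) by ring, Real.rpow_one_add' hs'.le (by intro h; linarith)]
      ring_nf
    calc s ^ p + p * s ^ (p - 1) * (t - s)
        = (1 + p * (t / s - 1)) * s ^ p := by
          rw [hps]; field_simp
      _ ≤ t ^ p := hb'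

lemma sq_rpow_half {x p : ℝ} (hx : 0 ≤ x) : (x ^ 2) ^ (p / 2) = x ^ p := by
  rw [← Real.rpow_natCast x 2, ← Real.rpow_mul hx]; congr 1; ring

variable {E : Type*} [NormedAddCommGroup E] [InnerProductSpace ℝ E]

lemma norm_rpow_tangent {p : ℝ} (hp : 2 ≤ p) (a b : E) :
    ‖a‖ ^ p + p * ‖a‖ ^ (p - 2) * (inner ℝ a (b - a) : ℝ) ≤ ‖b‖ ^ p := by
  have hp0 : (0:ℝ) < p := by linarith
  rcases eq_or_ne a 0 with rfl | ha
  · simp [Real.zero_rpow hp0.ne']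
    positivity
  · have hna : (0:ℝ) < ‖a‖ := norm_pos_iff.mpr ha
    rw [inner_sub_right, real_inner_self_eq_norm_sq]
    have e2 : ‖a‖ ^ (p - 2) * ‖a‖ ^ (2:ℕ) = ‖a‖ ^ p := by
      rw [← Real.rpow_natCast ‖a‖ 2, ← Real.rpow_add hna]; norm_num
    have e1 : ‖a‖ ^ (p - 2) * ‖a‖ = ‖a‖ ^ (p - 1) := by
      nth_rewrite 2 [← Real.rpow_one ‖a‖]
      rw [← Real.rpow_add hna]; ring_nf
    have hCS : (inner ℝ a b : ℝ) ≤ ‖a‖ * ‖b‖ := real_inner_le_norm a b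
    have hnn : 0 ≤ ‖a‖ ^ (p - 2) := Real.rpow_nonneg (norm_nonneg a) _
    have e3 : ‖a‖ ^ (p - 1) * ‖a‖ = ‖a‖ ^ p := by
      nth_rewrite 2 [← Real.rpow_one ‖a‖]
      rw [← Real.rpow_add hna]; ring_nf
    have hle := mul_le_mul_of_nonneg_left hCS hnn
    have htan := rpow_tangent (norm_nonneg a) (norm_nonneg b) (by linarith : 1 ≤ p)
    have h3 : ‖a‖ ^ (p - 2) * ((inner ℝ a b : ℝ) - ‖a‖ ^ (2:ℕ)) ≤
        ‖a‖ ^ (p - 1) * (‖b‖ - ‖a‖) := by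
      calc ‖a‖ ^ (p - 2) * ((inner ℝ a b : ℝ) - ‖a‖ ^ (2:ℕ))
          = ‖a‖ ^ (p - 2) * (inner ℝ a b : ℝ) - ‖a‖ ^ (p - 2) * ‖a‖ ^ (2:ℕ) := by ring
        _ ≤ ‖a‖ ^ (p - 2) * (‖a‖ * ‖b‖) - ‖a‖ ^ (p - 2) * ‖a‖ ^ (2:ℕ) := by linarith [hle]
        _ = (‖a‖ ^ (p - 2) * ‖a‖) * ‖b‖ - ‖a‖ ^ p := by rw [e2]; ring
        _ = ‖a‖ ^ (p - 1) * ‖b‖ - ‖a‖ ^ (p - 1) * ‖a‖ := by rw [e1, e3]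
        _ = ‖a‖ ^ (p - 1) * (‖b‖ - ‖a‖) := by ring
    have h4 := mul_le_mul_of_nonneg_left h3 hp0.le
    calc ‖a‖ ^ p + p * ‖a‖ ^ (p - 2) * ((inner ℝ a b : ℝ) - ‖a‖ ^ (2:ℕ))
        = ‖a‖ ^ p + p * (‖a‖ ^ (p - 2) * ((inner ℝ a b : ℝ) - ‖a‖ ^ (2:ℕ))) := by ring
      _ ≤ ‖a‖ ^ p + p * (‖a‖ ^ (p - 1) * (‖b‖ - ‖a‖)) := by linarith [h4]
      _ = ‖a‖ ^ p + p * ‖a‖ ^ (p - 1) * (‖b‖ - ‖a‖) := by ring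
      _ ≤ ‖b‖ ^ p := htan

lemma clarkson {p : ℝ} (hp : 2 ≤ p) (a b : E) :
    2 * ‖(2:ℝ)⁻¹ • (a + b)‖ ^ p + 2 * ‖(2:ℝ)⁻¹ • (b - a)‖ ^ p ≤ ‖a‖ ^ p + ‖b‖ ^ p := by
  set A := ‖(2:ℝ)⁻¹ • (a + b)‖ with hAdef
  set B := ‖(2:ℝ)⁻¹ • (b - a)‖ with hBdef
  have hA : 0 ≤ A := norm_nonneg _
  have hB : 0 ≤ B := norm_nonneg _
  have hq : 1 ≤ p / 2 := by linarith
  have hpar : A ^ 2 + B ^ 2 = (‖a‖ ^ 2 + ‖b‖ ^ 2) / 2 := by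
    have hpl := parallelogram_law_with_norm ℝ a b
    have hA' : A = (2:ℝ)⁻¹ * ‖a + b‖ := by rw [hAdef, norm_smul]; norm_num
    have hB' : B = (2:ℝ)⁻¹ * ‖a - b‖ := by rw [hBdef, norm_smul, norm_sub_rev]; norm_num
    rw [hA', hB']; nlinarith [hpl]
  have step1 : A ^ p + B ^ p ≤ (A ^ 2 + B ^ 2) ^ (p / 2) := by
    calc A ^ p + B ^ p = (A ^ 2) ^ (p / 2) + (B ^ 2) ^ (p / 2) := by
          rw [sq_rpow_half hA, sq_rpow_half hB]
      _ ≤ (A ^ 2 + B ^ 2) ^ (p / 2) := rpow_superadd (sq_nonneg A) (sq_nonneg B) hq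
  have step2 : ((‖a‖ ^ 2 + ‖b‖ ^ 2) / 2) ^ (p / 2) ≤ (‖a‖ ^ p + ‖b‖ ^ p) / 2 := by
    have h := (convexOn_rpow hq).2 (Set.mem_Ici.mpr (sq_nonneg ‖a‖))
      (Set.mem_Ici.mpr (sq_nonneg ‖b‖)) (by norm_num : (0:ℝ) ≤ 1/2)
      (by norm_num : (0:ℝ) ≤ 1/2) (by norm_num)
    simp only [smul_eq_mul] at h
    calc ((‖a‖ ^ 2 + ‖b‖ ^ 2) / 2) ^ (p / 2)
        = (1/2 * ‖a‖ ^ 2 + 1/2 * ‖b‖ ^ 2) ^ (p / 2) := by ring_nf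
      _ ≤ 1/2 * (‖a‖ ^ 2) ^ (p / 2) + 1/2 * (‖b‖ ^ 2) ^ (p / 2) := h
      _ = (‖a‖ ^ p + ‖b‖ ^ p) / 2 := by
          rw [sq_rpow_half (norm_nonneg a), sq_rpow_half (norm_nonneg b)]; ring
  have mono : (A ^ 2 + B ^ 2) ^ (p / 2) ≤ ((‖a‖ ^ 2 + ‖b‖ ^ 2) / 2) ^ (p / 2) :=
    le_of_eq (by rw [hpar])
  linarith [step1, step2, mono]

lemma norm_rpow_tangent_aux {p : ℝ} (hp : 2 ≤ p) (n : ℕ) (a b : E) :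
    ‖a‖ ^ p + p * ‖a‖ ^ (p - 2) * (inner ℝ a (b - a) : ℝ)
      + (1 - ((2:ℝ) ^ (1 - p)) ^ n) / ((2:ℝ) ^ (p - 1) - 1) * ‖b - a‖ ^ p ≤ ‖b‖ ^ p := by
  have hB : (2:ℝ) ≤ (2:ℝ) ^ (p - 1) := by
    nth_rewrite 1 [show (2:ℝ) = (2:ℝ) ^ (1:ℝ) by norm_num]
    exact Real.rpow_le_rpow_of_exponent_le (by norm_num) (by linarith)
  have hK : (0:ℝ) < (2:ℝ) ^ (p - 1) - 1 := by linarith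
  have hq1 : (2:ℝ) ^ (1 - p) * (2:ℝ) ^ (p - 1) = 1 := by
    rw [← Real.rpow_add (by norm_num : (0:ℝ) < 2)]; norm_num
  have h2p : ((2:ℝ)⁻¹) ^ p = (2:ℝ) ^ (1 - p) / 2 := by
    rw [Real.inv_rpow (by norm_num : (0:ℝ) ≤ 2), Real.rpow_sub (by norm_num : (0:ℝ) < 2),
      Real.rpow_one]
    ring
  induction n generalizing b with
  | zero => simpa using norm_rpow_tangent hp a b
  | succ n ih =>
    set q := (2:ℝ) ^ (1 - p) with hqdef
    set K := (2:ℝ) ^ (p - 1) - 1 with hKdef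
    set m := (2:ℝ)⁻¹ • (a + b) with hmdef
    have hma : m - a = (2:ℝ)⁻¹ • (b - a) := by
      rw [hmdef, smul_sub, smul_add]; module
    have ihm := ih m
    have hip : (inner ℝ a (m - a) : ℝ) = 2⁻¹ * (inner ℝ a (b - a) : ℝ) := by
      rw [hma, real_inner_smul_right]
    have hn2 : ‖(2:ℝ)⁻¹‖ = (2:ℝ)⁻¹ := by norm_num
    have hnm : ‖m - a‖ ^ p = ((2:ℝ)⁻¹) ^ p * ‖b - a‖ ^ p := by
      rw [hma, norm_smul, hn2, Real.mul_rpow (by norm_num) (norm_nonneg _)]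
    have hcl := clarkson hp a b
    have hcl2 : ‖(2:ℝ)⁻¹ • (b - a)‖ ^ p = ((2:ℝ)⁻¹) ^ p * ‖b - a‖ ^ p := by
      rw [norm_smul, hn2, Real.mul_rpow (by norm_num) (norm_nonneg _)]
    rw [hcl2] at hcl
    rw [hip, hnm] at ihm
    rw [← hmdef] at hcl
    -- coefficient identity
    have hq1' : q * (K + 1) = 1 := by
      have hK1 : K + 1 = (2:ℝ) ^ (p - 1) := by rw [hKdef]; ring
      rw [hK1]; exact hq1
    have hnum : q * (1 - q ^ n) + q * K = 1 - q ^ (n + 1) := by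
      linear_combination hq1'
    have hco : (1 - q ^ (n + 1)) / K =
        2 * ((1 - q ^ n) / K) * ((2:ℝ)⁻¹) ^ p + 2 * ((2:ℝ)⁻¹) ^ p := by
      rw [h2p, ← hnum]
      field_simp
    have hco' : (1 - q ^ (n + 1)) / K * ‖b - a‖ ^ p =
        2 * ((1 - q ^ n) / K * (((2:ℝ)⁻¹) ^ p * ‖b - a‖ ^ p))
          + 2 * (((2:ℝ)⁻¹) ^ p * ‖b - a‖ ^ p) := by
      rw [hco]; ring
    linarith [ihm, hcl, hco']

lemma norm_rpow_tangent_strong {p : ℝ} (hp : 2 ≤ p) (a b : E) :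
    ‖a‖ ^ p + p * ‖a‖ ^ (p - 2) * (inner ℝ a (b - a) : ℝ)
      + 1 / ((2:ℝ) ^ (p - 1) - 1) * ‖b - a‖ ^ p ≤ ‖b‖ ^ p := by
  set q := (2:ℝ) ^ (1 - p) with hqdef
  have hq0 : 0 ≤ q := Real.rpow_nonneg (by norm_num) _
  have hq1 : q < 1 := by
    rw [hqdef]
    exact Real.rpow_lt_one_of_one_lt_of_neg (by norm_num) (by linarith)
  have htt : Filter.Tendsto
      (fun n : ℕ => (1 - q ^ n) / ((2:ℝ) ^ (p - 1) - 1) * ‖b - a‖ ^ p)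
      Filter.atTop (nhds ((1 - 0) / ((2:ℝ) ^ (p - 1) - 1) * ‖b - a‖ ^ p)) := by
    exact (((tendsto_const_nhds.sub
      (tendsto_pow_atTop_nhds_zero_of_lt_one hq0 hq1)).div_const _).mul_const _)
  have hbd : ∀ n : ℕ, (1 - q ^ n) / ((2:ℝ) ^ (p - 1) - 1) * ‖b - a‖ ^ p ≤
      ‖b‖ ^ p - (‖a‖ ^ p + p * ‖a‖ ^ (p - 2) * (inner ℝ a (b - a) : ℝ)) := fun n => by
    linarith [norm_rpow_tangent_aux hp n a b]
  have := le_of_tendsto' htt hbd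
  simp only [sub_zero] at this
  linarith [this]



/-- Key pointwise inequality in the weak comparison principle (Theorem WCP): for
`r ≥ 2` and positive `C¹` functions `u, v` on an open set `Ω`, at each `x ∈ Ω`
(writing `∇log u = ∇u/u`):
`(u^r - v^r)(|∇log u|^r - |∇log v|^r) - r v^r |∇log u|^{r-2}∇log u·(∇log v - ∇log u)
 - r u^r |∇log v|^{r-2}∇log v·(∇log u - ∇log v)
 ≥ (1/(2^{r-1}-1)) |u∇v - v∇u|^r (1/u^r + 1/v^r)`. -/
theorem stmt_12 (N : ℕ) (r : ℝ) (hr : 2 ≤ r)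
    (Ω : Set (EuclideanSpace ℝ (Fin N))) (hΩ : IsOpen Ω)
    (u v : EuclideanSpace ℝ (Fin N) → ℝ)
    (hu : ContDiffOn ℝ 1 u Ω) (hv : ContDiffOn ℝ 1 v Ω)
    (hupos : ∀ x ∈ Ω, 0 < u x) (hvpos : ∀ x ∈ Ω, 0 < v x)
    (x : EuclideanSpace ℝ (Fin N)) (hx : x ∈ Ω) :
    (1 / (2 ^ (r - 1) - 1)) * ‖u x • gradient v x - v x • gradient u x‖ ^ r
        * (1 / u x ^ r + 1 / v x ^ r) ≤
      (u x ^ r - v x ^ r) *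
          (‖(u x)⁻¹ • gradient u x‖ ^ r - ‖(v x)⁻¹ • gradient v x‖ ^ r)
        - r * v x ^ r * ‖(u x)⁻¹ • gradient u x‖ ^ (r - 2) *
            (inner ℝ ((u x)⁻¹ • gradient u x)
              ((v x)⁻¹ • gradient v x - (u x)⁻¹ • gradient u x) : ℝ)
        - r * u x ^ r * ‖(v x)⁻¹ • gradient v x‖ ^ (r - 2) *
            (inner ℝ ((v x)⁻¹ • gradient v x)
              ((u x)⁻¹ • gradient u x - (v x)⁻¹ • gradient v x) : ℝ) := by

  have hu0 : 0 < u x := hupos x hx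
  have hv0 : 0 < v x := hvpos x hx
  set w1 := (u x)⁻¹ • gradient u x with hw1
  set w2 := (v x)⁻¹ • gradient v x with hw2
  have hB : (2:ℝ) ≤ (2:ℝ) ^ (r - 1) := by
    nth_rewrite 1 [show (2:ℝ) = (2:ℝ) ^ (1:ℝ) by norm_num]
    exact Real.rpow_le_rpow_of_exponent_le (by norm_num) (by linarith)
  have hK : (0:ℝ) < (2:ℝ) ^ (r - 1) - 1 := by linarith
  have hA : (0:ℝ) < u x ^ r := Real.rpow_pos_of_pos hu0 r
  have hBv : (0:ℝ) < v x ^ r := Real.rpow_pos_of_pos hv0 r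
  have h1 := norm_rpow_tangent_strong hr w1 w2
  have h2 := norm_rpow_tangent_strong hr w2 w1
  rw [norm_sub_rev w1 w2] at h2
  -- the two scaled inequalities
  have H1 := mul_le_mul_of_nonneg_left h1 hBv.le
  have H2 := mul_le_mul_of_nonneg_left h2 hA.le
  -- norm identity
  have e1 : u x * v x * (v x)⁻¹ = u x := by field_simp
  have e2 : u x * v x * (u x)⁻¹ = v x := by field_simp
  have hsc : u x • gradient v x - v x • gradient u x = (u x * v x) • (w2 - w1) := by
    rw [hw1, hw2, smul_sub, smul_smul, smul_smul, e1, e2]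
  have hid : ‖u x • gradient v x - v x • gradient u x‖ = (u x * v x) * ‖w2 - w1‖ := by
    rw [hsc, norm_smul, Real.norm_eq_abs, abs_of_pos (mul_pos hu0 hv0)]
  have hidr : ‖u x • gradient v x - v x • gradient u x‖ ^ r
      = u x ^ r * (v x ^ r * ‖w2 - w1‖ ^ r) := by
    rw [hid, Real.mul_rpow (by positivity) (norm_nonneg _),
      Real.mul_rpow hu0.le hv0.le, mul_assoc]
  have hLHS : (1 / (2 ^ (r - 1) - 1)) * ‖u x • gradient v x - v x • gradient u x‖ ^ r
      * (1 / u x ^ r + 1 / v x ^ r)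
      = (u x ^ r + v x ^ r) * (1 / ((2:ℝ) ^ (r - 1) - 1) * ‖w2 - w1‖ ^ r) := by
    rw [hidr]
    field_simp
    ring
  rw [hLHS]
  linarith [H1, H2]
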